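/- Let n ≥ 2 and let F be a family of (n−1)-element subsets of [n]. Define the complementary singleton family F* = { {r} : r ∈ [n], [n] ∖ {r} ∉ F }. Then Alice(F) holds if and only if Bob(F*) does not hold. -/
import Mathlib


/-- The board `[n] = {1, …, n}` as a finite set of natural numbers. -/
def board (n : ℕ) : Finset ℕ := Finset.Icc 1 n

/-- The order-preserving relabelling of `[n] \ {x}` onto `[n-1]`:
elements below `x` are unchanged, elements above `x` drop by one. -/
def stdElt (x r : ℕ) : ℕ := if r < x then r else r - 1

/-- Standardise a set avoiding `x`: relabel it via `stdElt x`. -/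
def stdSet (x : ℕ) (S : Finset ℕ) : Finset ℕ := S.image (stdElt x)

/-- The standardised section `F_x^+ = { S \ {x} : x ∈ S ∈ F }`,
viewed as a family of subsets of `[n-1]`. -/
def secPlus (F : Set (Finset ℕ)) (x : ℕ) : Set (Finset ℕ) :=
  {T | ∃ S ∈ F, x ∈ S ∧ T = stdSet x (S.erase x)}

/-- The standardised section `F_x^- = { S ∈ F : x ∉ S }`,
viewed as a family of subsets of `[n-1]`. -/
def secMinus (F : Set (Finset ℕ)) (x : ℕ) : Set (Finset ℕ) :=
  {T | ∃ S ∈ F, x ∉ S ∧ T = stdSet x S}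

mutual
  /-- `AliceWins n k F`: Alice wins her `F`-game, where `F` is a family of
  `k`-subsets of `[n]`.  Terminal games (`k = 0` or `k = n`) are won iff `F`
  is nonempty; otherwise Alice needs a first offer `x` such that Bob wins both
  his `F_x^+`-game and his `F_x^-`-game. -/
  def AliceWins (n k : ℕ) (F : Set (Finset ℕ)) : Prop :=
    if h : k = 0 ∨ n ≤ k then F.Nonempty
    else ∃ x ∈ board n,
      BobWins (n - 1) (k - 1) (secPlus F x) ∧ BobWins (n - 1) k (secMinus F x)
  termination_by n
  decreasing_by all_goals omega

  /-- `BobWins n k F`: Bob wins his `F`-game, where `F` is a family of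
  `k`-subsets of `[n]`.  Terminal games (`k = 0` or `k = n`) are won iff `F`
  is nonempty; otherwise Bob needs, for every first offer `x`, that Alice wins
  her `F_x^+`-game or her `F_x^-`-game. -/
  def BobWins (n k : ℕ) (F : Set (Finset ℕ)) : Prop :=
    if h : k = 0 ∨ n ≤ k then F.Nonempty
    else ∀ x ∈ board n,
      AliceWins (n - 1) (k - 1) (secPlus F x) ∨ AliceWins (n - 1) k (secMinus F x)
  termination_by n
  decreasing_by all_goals omega
end

/-- `S ⪯ T` in the pointwise order: the increasing enumerations of `S` and `T`
have the same length and are pointwise `≤`. -/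
def PointwiseLE (S T : Finset ℕ) : Prop :=
  List.Forall₂ (· ≤ ·) (S.sort (· ≤ ·)) (T.sort (· ≤ ·))

/-- `F` consists of `k`-element subsets of `[n]`. -/
def IsFamilyOn (n k : ℕ) (F : Set (Finset ℕ)) : Prop :=
  ∀ S ∈ F, S ⊆ board n ∧ S.card = k

/-- `F` is pointwise-increasing as a family of `k`-subsets of `[n]`:
it is upwards closed in the pointwise order. -/
def IsIncreasingFamily (n k : ℕ) (F : Set (Finset ℕ)) : Prop :=
  ∀ S T : Finset ℕ, S ∈ F → T ⊆ board n → T.card = k → PointwiseLE S T → T ∈ F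

lemma aliceWins_terminal {n k : ℕ} (h : k = 0 ∨ n ≤ k) (F : Set (Finset ℕ)) :
    AliceWins n k F ↔ F.Nonempty := by rw [AliceWins, dif_pos h]
lemma bobWins_terminal {n k : ℕ} (h : k = 0 ∨ n ≤ k) (F : Set (Finset ℕ)) :
    BobWins n k F ↔ F.Nonempty := by rw [BobWins, dif_pos h]
lemma aliceWins_step {n k : ℕ} (h : ¬(k = 0 ∨ n ≤ k)) (F : Set (Finset ℕ)) :
    AliceWins n k F ↔ ∃ x ∈ board n,
      BobWins (n - 1) (k - 1) (secPlus F x) ∧ BobWins (n - 1) k (secMinus F x) := by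
  rw [AliceWins, dif_neg h]
lemma bobWins_step {n k : ℕ} (h : ¬(k = 0 ∨ n ≤ k)) (F : Set (Finset ℕ)) :
    BobWins n k F ↔ ∀ x ∈ board n,
      AliceWins (n - 1) (k - 1) (secPlus F x) ∨ AliceWins (n - 1) k (secMinus F x) := by
  rw [BobWins, dif_neg h]

lemma mem_board {n r : ℕ} : r ∈ board n ↔ 1 ≤ r ∧ r ≤ n := Finset.mem_Icc

lemma board_card (n : ℕ) : (board n).card = n := by
  simp [board, Nat.card_Icc]

lemma stdElt_inj {x a b : ℕ} (ha : a ≠ x) (hb : b ≠ x) (h : stdElt x a = stdElt x b) :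
    a = b := by
  unfold stdElt at h; split_ifs at h <;> omega

lemma stdSet_inj {x : ℕ} {S T : Finset ℕ} (hS : x ∉ S) (hT : x ∉ T)
    (h : stdSet x S = stdSet x T) : S = T := by
  have key : ∀ (A B : Finset ℕ), x ∉ A → x ∉ B → stdSet x A = stdSet x B → A ⊆ B := by
    intro A B hA hB hAB a haA
    have : stdElt x a ∈ stdSet x B := hAB ▸ Finset.mem_image_of_mem _ haA
    obtain ⟨b, hb, hba⟩ := Finset.mem_image.1 this
    have hbx : b ≠ x := fun e => hB (e ▸ hb)
    have hax : a ≠ x := fun e => hA (e ▸ haA)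
    exact stdElt_inj hbx hax hba ▸ hb
  exact Finset.Subset.antisymm (key S T hS hT h) (key T S hT hS h.symm)

lemma card_stdSet {x : ℕ} {S : Finset ℕ} (hx : x ∉ S) : (stdSet x S).card = S.card :=
by
  apply Finset.card_image_of_injOn
  intro a ha b hb h
  simp only [Finset.mem_coe] at ha hb
  have hax : a ≠ x := by rintro rfl; exact hx ha
  have hbx : b ≠ x := by rintro rfl; exact hx hb
  exact stdElt_inj hax hbx h

lemma stdSet_board_erase {n x : ℕ} (hx : x ∈ board n) :
    stdSet x ((board n).erase x) = board (n - 1) := by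
  rw [mem_board] at hx
  ext m
  simp only [stdSet, Finset.mem_image, Finset.mem_erase, mem_board]
  constructor
  · rintro ⟨r, ⟨hrx, h1, h2⟩, rfl⟩
    unfold stdElt; split_ifs <;> omega
  · rintro ⟨h1, h2⟩
    by_cases hm : m < x
    · exact ⟨m, ⟨by omega, by omega, by omega⟩, by unfold stdElt; simp [hm]⟩
    · refine ⟨m + 1, ⟨by omega, by omega, by omega⟩, ?_⟩
      unfold stdElt; split_ifs <;> omega

lemma stdSet_erase {x r : ℕ} {A : Finset ℕ} (hA : x ∉ A) (hr : r ≠ x) :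
    stdSet x (A.erase r) = (stdSet x A).erase (stdElt x r) := by
  ext m
  simp only [stdSet, Finset.mem_image, Finset.mem_erase]
  constructor
  · rintro ⟨a, ⟨har, haA⟩, rfl⟩
    have hax : a ≠ x := fun e => hA (e ▸ haA)
    exact ⟨fun h => har (stdElt_inj hax hr h), a, haA, rfl⟩
  · rintro ⟨hm, a, haA, rfl⟩
    exact ⟨a, ⟨fun e => hm (e ▸ rfl), haA⟩, rfl⟩

/-- The complementary singleton family. -/
def starFam (n : ℕ) (F : Set (Finset ℕ)) : Set (Finset ℕ) :=
  {S : Finset ℕ | ∃ r ∈ board n, (board n).erase r ∉ F ∧ S = {r}}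

lemma secMinus_nonempty {n : ℕ} {F : Set (Finset ℕ)} (hF : IsFamilyOn n (n - 1) F)
    {x : ℕ} (hx : x ∈ board n) :
    (secMinus F x).Nonempty ↔ (board n).erase x ∈ F := by
  constructor
  · rintro ⟨T, S, hS, hxS, rfl⟩
    obtain ⟨hsub, hcard⟩ := hF S hS
    have hSe : S = (board n).erase x := by
      apply Finset.eq_of_subset_of_card_le (Finset.subset_erase.2 ⟨hsub, hxS⟩)
      rw [Finset.card_erase_of_mem hx, board_card, hcard]
    rwa [← hSe]
  · intro h
    exact ⟨stdSet x ((board n).erase x), (board n).erase x, h, Finset.notMem_erase x _, rfl⟩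

lemma secPlus_star_nonempty {n : ℕ} {F : Set (Finset ℕ)} {x : ℕ} (hx : x ∈ board n) :
    (secPlus (starFam n F) x).Nonempty ↔ (board n).erase x ∉ F := by
  constructor
  · rintro ⟨T, S, ⟨r, hr, hrF, rfl⟩, hxS, rfl⟩
    have : r = x := (Finset.mem_singleton.1 hxS).symm
    rwa [this] at hrF
  · intro h
    exact ⟨stdSet x (({x} : Finset ℕ).erase x), {x}, ⟨x, hx, h, rfl⟩,
      Finset.mem_singleton_self x, rfl⟩

lemma secPlus_family {n : ℕ} {F : Set (Finset ℕ)} (hF : IsFamilyOn n (n - 1) F)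
    {x : ℕ} (hx : x ∈ board n) :
    IsFamilyOn (n - 1) (n - 1 - 1) (secPlus F x) := by
  rintro T ⟨S, hS, hxS, rfl⟩
  obtain ⟨hsub, hcard⟩ := hF S hS
  constructor
  · rw [← stdSet_board_erase hx]
    exact Finset.image_subset_image (Finset.erase_subset_erase x hsub)
  · rw [card_stdSet (Finset.notMem_erase x S), Finset.card_erase_of_mem hxS, hcard]

lemma erase_mem_secPlus_iff {n : ℕ} {F : Set (Finset ℕ)} (hF : IsFamilyOn n (n - 1) F)
    {x r : ℕ} (hx : x ∈ board n) (hr : r ∈ board n) (hrx : r ≠ x) :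
    (board (n - 1)).erase (stdElt x r) ∈ secPlus F x ↔ (board n).erase r ∈ F := by
  have hxnr : x ∈ (board n).erase r := Finset.mem_erase.2 ⟨fun e => hrx e.symm, hx⟩
  have hkey : stdSet x (((board n).erase r).erase x) = (board (n - 1)).erase (stdElt x r) := by
    rw [Finset.erase_right_comm, stdSet_erase (Finset.notMem_erase x _) hrx,
      stdSet_board_erase hx]
  constructor
  · rintro ⟨S, hS, hxS, heq⟩
    have h1 : S.erase x = ((board n).erase r).erase x := by
      apply stdSet_inj (Finset.notMem_erase x S) (Finset.notMem_erase x _)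
      rw [hkey, ← heq]
    have h2 : S = (board n).erase r := by
      rw [← Finset.insert_erase hxS, h1, Finset.insert_erase hxnr]
    rwa [← h2]
  · intro h
    exact ⟨(board n).erase r, h, hxnr, hkey.symm⟩

lemma star_secPlus {n : ℕ} {F : Set (Finset ℕ)} (hF : IsFamilyOn n (n - 1) F)
    {x : ℕ} (hx : x ∈ board n) :
    starFam (n - 1) (secPlus F x) = secMinus (starFam n F) x := by
  have hxb := mem_board.1 hx
  ext T
  constructor
  · rintro ⟨s, hs, hsG, rfl⟩
    have hsb := mem_board.1 hs
    set r : ℕ := if s < x then s else s + 1 with hrdef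
    have hrx : r ≠ x := by rw [hrdef]; split_ifs <;> omega
    have hrb : r ∈ board n := by rw [mem_board, hrdef]; split_ifs <;> omega
    have hsr : stdElt x r = s := by rw [hrdef]; unfold stdElt; split_ifs <;> omega
    refine ⟨{r}, ⟨r, hrb, ?_, rfl⟩, by simp [hrx.symm], ?_⟩
    · intro hmem
      exact hsG (hsr ▸ (erase_mem_secPlus_iff hF hx hrb hrx).2 hmem)
    · rw [stdSet, Finset.image_singleton, hsr]
  · rintro ⟨S, ⟨r, hr, hrF, rfl⟩, hxS, rfl⟩
    have hrx : r ≠ x := fun e => hxS (e ▸ Finset.mem_singleton_self r)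
    have hrb := mem_board.1 hr
    refine ⟨stdElt x r, ?_, ?_, by rw [stdSet, Finset.image_singleton]⟩
    · rw [mem_board]; unfold stdElt; split_ifs <;> omega
    · intro hmem
      exact hrF ((erase_mem_secPlus_iff hF hx hr hrx).1 hmem)

lemma main_ind : ∀ n, 1 ≤ n → ∀ F : Set (Finset ℕ), IsFamilyOn n (n - 1) F →
    (AliceWins n (n - 1) F ↔ ¬ BobWins n 1 (starFam n F)) ∧
    (BobWins n (n - 1) F ↔ ¬ AliceWins n 1 (starFam n F)) := by
  intro n
  induction n using Nat.strong_induction_on with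
  | _ n IH =>
    intro hn F hF
    rcases eq_or_lt_of_le hn with h1 | h2
    · -- n = 1
      subst h1
      have hFe : F.Nonempty ↔ ∅ ∈ F := by
        constructor
        · rintro ⟨S, hS⟩
          have := (hF S hS).2
          rw [Finset.card_eq_zero.1 this] at hS
          exact hS
        · exact fun h => ⟨∅, h⟩
      have hstar : (starFam 1 F).Nonempty ↔ ∅ ∉ F := by
        constructor
        · rintro ⟨S, r, hr, hrF, rfl⟩
          have : r = 1 := by have := mem_board.1 hr; omega
          subst this
          simpa [board, Finset.Icc_self, Finset.erase_singleton] using hrF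
        · intro h
          refine ⟨{1}, 1, by rw [mem_board]; omega, ?_, rfl⟩
          simpa [board, Finset.Icc_self, Finset.erase_singleton] using h
      rw [aliceWins_terminal (Or.inl rfl), bobWins_terminal (Or.inl rfl),
        aliceWins_terminal (Or.inr le_rfl), bobWins_terminal (Or.inr le_rfl),
        hFe, hstar]
      exact ⟨⟨fun h hn2 => hn2 h, not_not.mp⟩, ⟨fun h hn2 => hn2 h, not_not.mp⟩⟩
    · -- 2 ≤ n
      have hn2 : 2 ≤ n := h2
      have hkA : ¬(n - 1 = 0 ∨ n ≤ n - 1) := by omega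
      have hk1 : ¬((1:ℕ) = 0 ∨ n ≤ 1) := by omega
      have key : ∀ x ∈ board n,
          (BobWins (n - 1) (n - 1 - 1) (secPlus F x) ↔
            ¬ AliceWins (n - 1) 1 (secMinus (starFam n F) x)) ∧
          (AliceWins (n - 1) (n - 1 - 1) (secPlus F x) ↔
            ¬ BobWins (n - 1) 1 (secMinus (starFam n F) x)) := by
        intro x hx
        have hIH := IH (n - 1) (by omega) (by omega) (secPlus F x) (secPlus_family hF hx)
        rw [← star_secPlus hF hx]
        exact ⟨hIH.2, hIH.1⟩
      have minusIff : ∀ x ∈ board n,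
          (BobWins (n - 1) (n - 1) (secMinus F x) ↔ (board n).erase x ∈ F) ∧
          (AliceWins (n - 1) (n - 1) (secMinus F x) ↔ (board n).erase x ∈ F) := by
        intro x hx
        rw [bobWins_terminal (Or.inr le_rfl), aliceWins_terminal (Or.inr le_rfl),
          secMinus_nonempty hF hx]
        exact ⟨Iff.rfl, Iff.rfl⟩
      have plusStar : ∀ x ∈ board n,
          (AliceWins (n - 1) (1 - 1) (secPlus (starFam n F) x) ↔ (board n).erase x ∉ F) ∧
          (BobWins (n - 1) (1 - 1) (secPlus (starFam n F) x) ↔ (board n).erase x ∉ F) := by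
        intro x hx
        rw [aliceWins_terminal (Or.inl rfl), bobWins_terminal (Or.inl rfl),
          secPlus_star_nonempty hx]
        exact ⟨Iff.rfl, Iff.rfl⟩
      constructor
      · rw [aliceWins_step hkA, bobWins_step hk1]
        push_neg
        constructor
        · rintro ⟨x, hx, hP, hM⟩
          refine ⟨x, hx, ?_, ?_⟩
          · rw [(plusStar x hx).1]
            intro h; exact h ((minusIff x hx).1.1 hM)
          · exact (key x hx).1.1 hP
        · rintro ⟨x, hx, hP, hM⟩
          refine ⟨x, hx, (key x hx).1.2 hM, ?_⟩
          rw [(minusIff x hx).1]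
          by_contra h
          exact hP ((plusStar x hx).1.2 h)
      · rw [bobWins_step hkA, aliceWins_step hk1]
        push_neg
        constructor
        · intro hall x hx hBP
          rcases hall x hx with hP | hM
          · exact (key x hx).2.1 hP
          · exact absurd ((minusIff x hx).2.1 hM) ((plusStar x hx).2.1 hBP)
        · intro hall x hx
          by_cases h : (board n).erase x ∈ F
          · exact Or.inr ((minusIff x hx).2.2 h)
          · exact Or.inl ((key x hx).2.2 (hall x hx ((plusStar x hx).2.2 h)))

/-- for a family `F` of `(n-1)`-subsets of `[n]` and its
complementary singleton family `F* = { {r} : r ∈ [n], [n] \ {r} ∉ F }`,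
Alice wins her `F`-game if and only if Bob does not win his `F*`-game. -/
theorem alice_iff_not_bob_complement (n : ℕ) (hn : 2 ≤ n) (F : Set (Finset ℕ))
    (hF : IsFamilyOn n (n - 1) F) :
    AliceWins n (n - 1) F ↔
      ¬ BobWins n 1
        {S : Finset ℕ | ∃ r ∈ board n, (board n).erase r ∉ F ∧ S = {r}} := by
  exact (main_ind n (by omega) F hF).1
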